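/- arXiv:1607.08837 — 2 statements merged into one kernel-verified Lean document; each statement's English description precedes it below -/
import Mathlib

section
/- Let p be a prime with p ≡ 3 (mod 4), and for a, b ∈ Z_p define N(a,b) = |{(u,v) ∈ Q × Q : a + u = b - v}|, where Q is the set of nonzero squares of Z_p. Then N(a,b) = (p-3)/4 if b - a ∈ Q, N(a,b) = (p+1)/4 if a ≠ b and b - a ∉ Q, and N(a,b) = 0 if a = b. -/
open Finset

section aux

variable {p : ℕ} [Fact p.Prime]

private lemma chi_eq_one_iff (u : ZMod p) :
    quadraticChar (ZMod p) u = 1 ↔ ∃ x : ZMod p, x ≠ 0 ∧ u = x ^ 2 := by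
  constructor
  · intro h
    have hu : u ≠ 0 := by
      intro h0; rw [h0, quadraticChar_zero] at h; exact one_ne_zero h.symm
    obtain ⟨r, hr⟩ := (quadraticChar_one_iff_isSquare hu).mp h
    refine ⟨r, fun h0 => hu (by simp [hr, h0]), by rw [hr, sq]⟩
  · rintro ⟨x, hx, rfl⟩
    exact quadraticChar_sq_one' hx

private lemma chi_neg_one (h3 : p % 4 = 3) : quadraticChar (ZMod p) (-1) = -1 := by
  refine quadraticChar_neg_one_iff_not_isSquare.mpr ?_
  rw [ZMod.exists_sq_eq_neg_one_iff]
  simp [h3]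

private lemma key_sum (h3 : p % 4 = 3) {c : ZMod p} (hc : c ≠ 0) :
    (4 : ℤ) * (Nat.card {u : ZMod p //
        quadraticChar (ZMod p) u = 1 ∧ quadraticChar (ZMod p) (c - u) = 1}) =
      (p : ℤ) - 1 - 2 * quadraticChar (ZMod p) c := by
  rw [Nat.card_eq_fintype_card, Fintype.card_subtype]
  have hp2 : p ≠ 2 := by omega
  have hchar : ringChar (ZMod p) ≠ 2 := by rw [ZMod.ringChar_zmod_n]; exact hp2
  set χ := quadraticChar (ZMod p) with hχdef
  have hquad : χ.IsQuadratic := quadraticChar_isQuadratic (ZMod p)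
  have hne1 : χ ≠ 1 := quadraticChar_ne_one hchar
  set f : ZMod p → ℤ := fun u => (1 + χ u) * (1 + χ (c - u)) with hfdef
  -- Jacobi sum evaluation
  have hJ : jacobiSum χ χ = 1 := by
    have := jacobiSum_nontrivial_inv hne1
    rw [hquad.inv] at this
    rw [this]
    rw [chi_neg_one h3]; ring
  have hχc2 : χ c * χ c = 1 := by
    rw [← map_mul, ← sq]; exact quadraticChar_sq_one' hc
  have hcross : ∑ u : ZMod p, χ u * χ (c - u) = 1 := by
    have he : ∑ u : ZMod p, χ u * χ (c - u)
        = ∑ x : ZMod p, χ (c * x) * χ (c - c * x) :=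
      (Fintype.sum_equiv (Equiv.mulLeft₀ c hc) _ _ (fun x => rfl)).symm
    rw [he]
    have : ∀ x : ZMod p, χ (c * x) * χ (c - c * x)
        = (χ c * χ c) * (χ x * χ (1 - x)) := by
      intro x
      have : c - c * x = c * (1 - x) := by ring
      rw [this, map_mul, map_mul]; ring
    simp_rw [this, ← Finset.mul_sum]
    rw [hχc2, one_mul]
    exact hJ
  -- total sum
  have hsum : ∑ u : ZMod p, f u = (p : ℤ) + 1 := by
    have e1 : ∀ u : ZMod p, f u = 1 + χ u + χ (c - u) + χ u * χ (c - u) := by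
      intro u; simp only [hfdef]; ring
    simp_rw [e1]
    rw [Finset.sum_add_distrib, Finset.sum_add_distrib, Finset.sum_add_distrib]
    have h1 : ∑ u : ZMod p, χ u = 0 := MulChar.sum_eq_zero_of_ne_one hne1
    have h2 : ∑ u : ZMod p, χ (c - u) = 0 := by
      rw [← h1]
      exact Fintype.sum_equiv (Equiv.subLeft c) _ _ (fun x => rfl)
    rw [h1, h2, hcross, Finset.sum_const, Finset.card_univ, ZMod.card]
    ring
  -- split off u = 0 and u = c
  have h0c : ({0, c} : Finset (ZMod p)) ⊆ univ := subset_univ _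
  have hsplit : ∑ u ∈ univ \ ({0, c} : Finset (ZMod p)), f u + ∑ u ∈ ({0, c} : Finset (ZMod p)), f u
      = ∑ u : ZMod p, f u := Finset.sum_sdiff h0c
  have hpair : ∑ u ∈ ({0, c} : Finset (ZMod p)), f u = 2 * (1 + χ c) := by
    rw [Finset.sum_pair (Ne.symm hc)]
    simp only [hfdef, sub_zero, sub_self, quadraticChar_zero, hχdef]
    ring
  set g : ZMod p → ℤ := fun u => if χ u = 1 ∧ χ (c - u) = 1 then 4 else 0 with hgdef
  have hfg : ∀ u ∈ univ \ ({0, c} : Finset (ZMod p)), f u = g u := by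
    intro u hu
    simp only [Finset.mem_sdiff, Finset.mem_insert, Finset.mem_singleton, not_or] at hu
    obtain ⟨-, hu0, huc⟩ := hu
    have hcu : c - u ≠ 0 := sub_ne_zero.mpr (Ne.symm huc)
    rcases quadraticChar_dichotomy hu0 with h1 | h1 <;>
      rcases quadraticChar_dichotomy hcu with h2 | h2 <;>
      (rw [← hχdef] at h1 h2; simp [hfdef, hgdef, h1, h2])
  have hgsum : ∑ u ∈ univ \ ({0, c} : Finset (ZMod p)), g u = ∑ u : ZMod p, g u := by
    refine Finset.sum_subset (Finset.sdiff_subset) ?_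
    intro u _ hu
    simp only [Finset.mem_sdiff, mem_univ, true_and, Finset.mem_insert,
      Finset.mem_singleton, not_not] at hu
    rcases hu with rfl | rfl <;> simp [hgdef, quadraticChar_zero, hχdef]
  have hgcount : ∑ u : ZMod p, g u =
      4 * ((univ.filter (fun u : ZMod p => χ u = 1 ∧ χ (c - u) = 1)).card : ℤ) := by
    rw [hgdef]
    rw [Finset.sum_ite, Finset.sum_const, Finset.sum_const_zero, add_zero,
      nsmul_eq_mul, mul_comm]
  have := hsplit
  rw [Finset.sum_congr rfl hfg, hgsum, hgcount, hpair, hsum] at this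
  linarith [this]

end aux

/-- for `p ≡ 3 (mod 4)` prime, the count `N(a,b)` of pairs `(u,v)` of
nonzero squares with `a + u = b - v` is `(p-3)/4`, `(p+1)/4` or `0` according to cases. -/
theorem count_pairs_nonzero_squares_three_mod_four (p : ℕ) (hp : p.Prime) (h : p % 4 = 3)
    (a b : ZMod p) :
    ((∃ x : ZMod p, x ≠ 0 ∧ b - a = x ^ 2) →
      Nat.card {uv : ZMod p × ZMod p // (∃ x : ZMod p, x ≠ 0 ∧ uv.1 = x ^ 2) ∧
        (∃ y : ZMod p, y ≠ 0 ∧ uv.2 = y ^ 2) ∧ a + uv.1 = b - uv.2} = (p - 3) / 4) ∧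
    ((a ≠ b ∧ ¬ (∃ x : ZMod p, x ≠ 0 ∧ b - a = x ^ 2)) →
      Nat.card {uv : ZMod p × ZMod p // (∃ x : ZMod p, x ≠ 0 ∧ uv.1 = x ^ 2) ∧
        (∃ y : ZMod p, y ≠ 0 ∧ uv.2 = y ^ 2) ∧ a + uv.1 = b - uv.2} = (p + 1) / 4) ∧
    (a = b →
      Nat.card {uv : ZMod p × ZMod p // (∃ x : ZMod p, x ≠ 0 ∧ uv.1 = x ^ 2) ∧
        (∃ y : ZMod p, y ≠ 0 ∧ uv.2 = y ^ 2) ∧ a + uv.1 = b - uv.2} = 0) := by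
  haveI : Fact p.Prime := ⟨hp⟩
  have hp5 : 3 ≤ p := by omega
  have hequiv : {uv : ZMod p × ZMod p // (∃ x : ZMod p, x ≠ 0 ∧ uv.1 = x ^ 2) ∧
        (∃ y : ZMod p, y ≠ 0 ∧ uv.2 = y ^ 2) ∧ a + uv.1 = b - uv.2} ≃
      {u : ZMod p // quadraticChar (ZMod p) u = 1 ∧
        quadraticChar (ZMod p) ((b - a) - u) = 1} := by
    refine ⟨fun w => ⟨w.1.1, ?_⟩, fun w => ⟨(w.1, (b - a) - w.1), ?_⟩, ?_, ?_⟩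
    · obtain ⟨h1, h2, h3⟩ := w.2
      have hv : w.1.2 = (b - a) - w.1.1 := by linear_combination h3
      exact ⟨(chi_eq_one_iff _).mpr h1, (chi_eq_one_iff _).mpr (hv ▸ h2)⟩
    · obtain ⟨h1, h2⟩ := w.2
      refine ⟨(chi_eq_one_iff _).mp h1, (chi_eq_one_iff _).mp h2, by ring⟩
    · rintro ⟨⟨u, v⟩, h1, h2, h3⟩
      have hv : v = (b - a) - u := by linear_combination h3
      simp [hv]
    · rintro ⟨u, hu⟩; rfl
  rw [Nat.card_congr hequiv]
  refine ⟨?_, ?_, ?_⟩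
  · rintro ⟨x, hx, hbx⟩
    have hc : b - a ≠ 0 := by rw [hbx]; exact pow_ne_zero 2 hx
    have hχc : quadraticChar (ZMod p) (b - a) = 1 := (chi_eq_one_iff _).mpr ⟨x, hx, hbx⟩
    have hk := key_sum h hc
    rw [hχc] at hk
    omega
  · rintro ⟨hab, hns⟩
    have hc : b - a ≠ 0 := sub_ne_zero.mpr (Ne.symm hab)
    have hχc : quadraticChar (ZMod p) (b - a) = -1 := by
      rcases quadraticChar_dichotomy hc with h1 | h1
      · exact absurd ((chi_eq_one_iff _).mp h1) hns
      · exact h1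
    have hk := key_sum h hc
    rw [hχc] at hk
    omega
  · intro hab
    have hEmpty : IsEmpty {u : ZMod p // quadraticChar (ZMod p) u = 1 ∧
        quadraticChar (ZMod p) ((b - a) - u) = 1} := by
      refine ⟨fun w => ?_⟩
      obtain ⟨h1, h2⟩ := w.2
      have he : (b - a) - (w : ZMod p) = -1 * (w : ZMod p) := by linear_combination -hab
      rw [he, map_mul, chi_neg_one h, h1] at h2
      norm_num at h2
    exact Nat.card_of_isEmpty
end

section
/- Let α > 2 and n = 2^α. For c ∈ Z_n and positive integer k, the number of k-tuples (x_1,...,x_k) of units of Z_n with x_1^2 + ... + x_k^2 = c equals 2^{2k + (α-3)(k-1)} if c ≡ k (mod 8), and 0 otherwise. -/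
namespace CSQ

lemma odd_unit_val (n : ℕ) [NeZero n] (hn : 2 ∣ n) (u : (ZMod n)ˣ) :
    (u : ZMod n).val % 2 = 1 := by
  have h := ZMod.val_coe_unit_coprime u
  have h2 : Nat.Coprime ((u : ZMod n)).val 2 := Nat.Coprime.coprime_dvd_right hn h
  have h3 : ¬ (2:ℕ) ∣ (u : ZMod n).val :=
    (Nat.Prime.coprime_iff_not_dvd Nat.prime_two).mp (Nat.coprime_comm.mp h2)
  omega

section Step

variable (α : ℕ)

local notation "M" => (2^α : ℕ)
local notation "N" => (2^(α+1) : ℕ)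

lemma hMN : (M : ℕ) ∣ N := pow_dvd_pow 2 (Nat.le_succ α)

/-- the reduction ring hom -/
noncomputable def ρ : ZMod N →+* ZMod M := ZMod.castHom (hMN α) _

instance : NeZero (N : ℕ) := ⟨pow_ne_zero _ two_ne_zero⟩
instance : NeZero (M : ℕ) := ⟨pow_ne_zero _ two_ne_zero⟩

lemma rho_apply (z : ZMod N) : ρ α z = ((z.val : ℕ) : ZMod M) := by
  rw [ρ, ZMod.castHom_apply, ← ZMod.natCast_val]

lemma rho_natCast (m : ℕ) : ρ α ((m : ℕ) : ZMod N) = ((m : ℕ) : ZMod M) := map_natCast _ m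

lemma rho_lift (a : ZMod M) : ρ α ((a.val : ℕ) : ZMod N) = a := by
  rw [rho_natCast, ZMod.natCast_rightInverse a]

lemma K0 (z : ZMod N) (h : ρ α z = 0) : z = 0 ∨ z = ((2^α : ℕ) : ZMod N) := by
  rw [rho_apply] at h
  have hd : (M:ℕ) ∣ z.val := (ZMod.natCast_eq_zero_iff _ _).mp h
  have hlt : z.val < N := z.val_lt
  obtain ⟨t, ht⟩ := hd
  have h2 : (N:ℕ) = M * 2 := by ring
  have ht2 : t < 2 := by
    by_contra hc
    push_neg at hc
    have : M * 2 ≤ M * t := Nat.mul_le_mul_left _ hc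
    omega
  have hz : z = ((z.val : ℕ) : ZMod N) := (ZMod.natCast_rightInverse z).symm
  interval_cases t
  · left; rw [hz, ht]; simp
  · right; rw [hz, ht]; norm_num

lemma Kdich (x y : ZMod N) (h : ρ α x = ρ α y) :
    x = y ∨ x = y + ((2^α : ℕ) : ZMod N) := by
  have h0 : ρ α (x - y) = 0 := by rw [map_sub, h, sub_self]
  rcases K0 α _ h0 with h1 | h1
  · left; linear_combination h1
  · right; linear_combination h1

lemma Nzero : ((2^(α+1) : ℕ) : ZMod N) = 0 := ZMod.natCast_self _

lemma pow_zero_of_le (e : ℕ) (he : α + 1 ≤ e) : ((2^e : ℕ) : ZMod N) = 0 := by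
  rw [ZMod.natCast_eq_zero_iff]
  exact pow_dvd_pow 2 he

lemma dd_zero (hα : 1 ≤ α) : ((2^α : ℕ) : ZMod N) * ((2^α : ℕ) : ZMod N) = 0 := by
  have : ((2^α : ℕ) : ZMod N) * ((2^α : ℕ) : ZMod N) = ((2^(α+α) : ℕ) : ZMod N) := by
    push_cast [pow_add]; ring
  rw [this]
  exact pow_zero_of_le α (α + α) (by omega)

lemma two_d : (2 : ZMod N) * ((2^α : ℕ) : ZMod N) = 0 := by
  have : (2 : ZMod N) * ((2^α : ℕ) : ZMod N) = ((2^(α+1) : ℕ) : ZMod N) := by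
    push_cast [pow_succ]; ring
  rw [this, Nzero]

lemma sq_congr (hα : 1 ≤ α) (x y : ZMod N) (h : ρ α x = ρ α y) : x ^ 2 = y ^ 2 := by
  rcases Kdich α x y h with rfl | rfl
  · rfl
  · have h1 := two_d α
    have h2 := dd_zero α hα
    linear_combination y * h1 + h2

/-- canonical lift of the square -/
noncomputable def σ : ZMod M → ZMod N := fun a => ((a.val : ℕ) : ZMod N) ^ 2

lemma sq_eq_sigma (hα : 1 ≤ α) (z : ZMod N) : z ^ 2 = σ α (ρ α z) := by
  exact sq_congr α hα z _ (by rw [rho_lift])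

lemma rho_sigma (a : ZMod M) : ρ α (σ α a) = a ^ 2 := by
  rw [σ, map_pow, rho_lift]

lemma odd_mul_d (m : ℕ) (hm : m % 2 = 1) :
    ((2^α : ℕ) : ZMod N) * ((m : ℕ) : ZMod N) = ((2^α : ℕ) : ZMod N) := by
  obtain ⟨t, ht⟩ : ∃ t, m = 2 * t + 1 := ⟨m / 2, by omega⟩
  subst ht
  have h1 := two_d α
  push_cast at h1 ⊢
  linear_combination (t : ZMod N) * h1

lemma M_natCast_self : ((2^α : ℕ) : ZMod M) = 0 := ZMod.natCast_self _

lemma M_pow_zero_of_le (e : ℕ) (he : α ≤ e) : ((2^e : ℕ) : ZMod M) = 0 := by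
  rw [ZMod.natCast_eq_zero_iff]
  exact pow_dvd_pow 2 he

lemma M_two_e (hα : 1 ≤ α) : (2 : ZMod M) * ((2^(α-1) : ℕ) : ZMod M) = 0 := by
  have hn : (2 * 2^(α-1) : ℕ) = 2^α := by
    rw [← pow_succ']; congr 1; omega
  calc (2 : ZMod M) * ((2^(α-1) : ℕ) : ZMod M) = ((2 * 2^(α-1) : ℕ) : ZMod M) := by
        push_cast; ring
    _ = 0 := by rw [hn, M_natCast_self]

lemma M_ee (hα : 2 ≤ α) :
    ((2^(α-1) : ℕ) : ZMod M) * ((2^(α-1) : ℕ) : ZMod M) = 0 := by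
  calc ((2^(α-1) : ℕ) : ZMod M) * ((2^(α-1) : ℕ) : ZMod M)
      = ((2^(α-1+(α-1)) : ℕ) : ZMod M) := by rw [pow_add]; push_cast; ring
    _ = 0 := M_pow_zero_of_le α _ (by omega)

/-- the involution `u ↦ u + 2^(α-1)` on units -/
noncomputable def iu (hα : 2 ≤ α) (u : (ZMod M)ˣ) : (ZMod M)ˣ :=
  Units.mkOfMulEqOne ((u : ZMod M) + ((2^(α-1) : ℕ) : ZMod M))
    ((↑u⁻¹ : ZMod M) * (1 - ((2^(α-1) : ℕ) : ZMod M) * (↑u⁻¹ : ZMod M)))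
    (by
      have h1 := u.mul_inv
      have h2 := M_ee α hα
      linear_combination (1 - ((2^(α-1) : ℕ) : ZMod M) * (↑u⁻¹ : ZMod M)) * h1
        - ((↑u⁻¹ : ZMod M) * (↑u⁻¹ : ZMod M)) * h2)

lemma coe_iu (hα : 2 ≤ α) (u : (ZMod M)ˣ) :
    ((iu α hα u : (ZMod M)ˣ) : ZMod M) = (u : ZMod M) + ((2^(α-1) : ℕ) : ZMod M) := rfl

lemma iu_invol (hα : 2 ≤ α) (u : (ZMod M)ˣ) : iu α hα (iu α hα u) = u := by
  apply Units.ext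
  rw [coe_iu, coe_iu]
  have h := M_two_e α (by omega)
  linear_combination h

lemma sq_iu (hα : 2 ≤ α) (u : (ZMod M)ˣ) :
    ((iu α hα u : (ZMod M)ˣ) : ZMod M) ^ 2 = (u : ZMod M) ^ 2 := by
  rw [coe_iu]
  have h1 := M_two_e α (by omega)
  have h2 := M_ee α hα
  linear_combination (u : ZMod M) * h1 + h2

lemma sigma_iu (hα : 3 ≤ α) (u : (ZMod M)ˣ) :
    σ α ((iu α (by omega) u : (ZMod M)ˣ) : ZMod M)
      = σ α (u : ZMod M) + ((2^α : ℕ) : ZMod N) := by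
  set L : ZMod N := (((u : ZMod M).val : ℕ) : ZMod N) with hL
  set e' : ZMod N := ((2^(α-1) : ℕ) : ZMod N) with he'
  set d : ZMod N := ((2^α : ℕ) : ZMod N) with hd
  have hρw : ρ α (L + e') = ((iu α (by omega) u : (ZMod M)ˣ) : ZMod M) := by
    rw [map_add, rho_lift, rho_natCast, coe_iu]
  have h1 : σ α ((iu α (by omega) u : (ZMod M)ˣ) : ZMod M) = (L + e') ^ 2 := by
    rw [← hρw, ← sq_eq_sigma α (by omega)]
  have hval : (u : ZMod M).val % 2 = 1 :=
    odd_unit_val _ (dvd_pow_self 2 (by omega : α ≠ 0)) u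
  have h2 : d * L = d := odd_mul_d α _ hval
  have h3 : e' * e' = 0 := by
    rw [he']
    calc ((2^(α-1) : ℕ) : ZMod N) * ((2^(α-1) : ℕ) : ZMod N)
        = ((2^(α-1+(α-1)) : ℕ) : ZMod N) := by rw [pow_add]; push_cast; ring
      _ = 0 := pow_zero_of_le α _ (by omega)
  have h4 : (2 : ZMod N) * e' = d := by
    have hn : (2 * 2^(α-1) : ℕ) = 2^α := by rw [← pow_succ']; congr 1; omega
    rw [he', hd, ← hn]; push_cast; ring
  have hσu : σ α (u : ZMod M) = L ^ 2 := rfl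
  rw [h1, hσu]
  linear_combination L * h4 + h3 + h2

lemma d_ne_zero : ((2^α : ℕ) : ZMod N) ≠ 0 := by
  intro h
  have hd : (N : ℕ) ∣ 2^α := (ZMod.natCast_eq_zero_iff _ _).mp h
  have h1 : (N : ℕ) ≤ 2^α := Nat.le_of_dvd (pow_pos (by norm_num) _) hd
  have h2 : (2:ℕ)^α < 2^(α+1) := Nat.pow_lt_pow_succ (by norm_num)
  omega

lemma isUnit_of_rho_unit (hα : 1 ≤ α) (z : ZMod N) (u : (ZMod M)ˣ)
    (h : ρ α z = (u : ZMod M)) : IsUnit z := by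
  have h1 : z.val % M = ((u : ZMod M)).val := by
    rw [← h, rho_apply, ZMod.val_natCast]
  have hodd := odd_unit_val _ (dvd_pow_self 2 (by omega : α ≠ 0)) u
  have hM : (2:ℕ) ∣ M := dvd_pow_self 2 (by omega : α ≠ 0)
  have hzodd : z.val % 2 = 1 := by
    rw [← Nat.mod_mod_of_dvd z.val hM, h1]; exact hodd
  have hcop : Nat.Coprime z.val (N : ℕ) := by
    apply Nat.Coprime.pow_right
    exact Nat.coprime_comm.mp ((Nat.prime_two.coprime_iff_not_dvd).mpr (by omega))
  have hz : z = ((z.val : ℕ) : ZMod N) := (ZMod.natCast_rightInverse z).symm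
  rw [hz]
  exact (ZMod.isUnit_iff_coprime _ _).mpr hcop

lemma fiber_card (hα : 1 ≤ α) (u : (ZMod M)ˣ) :
    Nat.card {v : (ZMod N)ˣ // ρ α (v : ZMod N) = (u : ZMod M)} = 2 := by
  have e1 : {v : (ZMod N)ˣ // ρ α (v : ZMod N) = (u : ZMod M)}
      ≃ {z : ZMod N // ρ α z = (u : ZMod M)} :=
    { toFun := fun v => ⟨(v.1 : ZMod N), v.2⟩
      invFun := fun z => ⟨(isUnit_of_rho_unit α hα z.1 u z.2).unit, by
        have hs := (isUnit_of_rho_unit α hα z.1 u z.2).unit_spec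
        simp only [hs]; exact z.2⟩
      left_inv := fun v => by
        apply Subtype.ext; apply Units.ext
        exact (isUnit_of_rho_unit α hα ((v.1 : ZMod (2^(α+1)))) u v.2).unit_spec
      right_inv := fun z => by
        apply Subtype.ext
        exact (isUnit_of_rho_unit α hα z.1 u z.2).unit_spec }
  rw [Nat.card_congr e1]
  have e2 : Nat.card {z : ZMod N // ρ α z = (u : ZMod M)}
      = Set.ncard {z : ZMod N | ρ α z = (u : ZMod M)} := Nat.card_coe_set_eq _
  rw [e2]
  set L : ZMod N := (((u : ZMod M).val : ℕ) : ZMod N) with hL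
  set d : ZMod N := ((2^α : ℕ) : ZMod N) with hd
  have hset : {z : ZMod N | ρ α z = (u : ZMod M)} = {L, L + d} := by
    ext z
    simp only [Set.mem_setOf_eq, Set.mem_insert_iff, Set.mem_singleton_iff]
    constructor
    · intro h
      exact Kdich α z L (by rw [h, rho_lift])
    · rintro (rfl | rfl)
      · rw [rho_lift]
      · rw [map_add, rho_lift, hd, rho_natCast, M_natCast_self, add_zero]
  rw [hset]
  apply Set.ncard_pair
  intro h
  exact d_ne_zero α (by linear_combination h.symm)

lemma tuple_fiber_card (hα : 1 ≤ α) (k : ℕ) (y : Fin k → (ZMod M)ˣ) :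
    Nat.card {x : Fin k → (ZMod N)ˣ //
      (fun i => Units.map (ρ α).toMonoidHom (x i)) = y} = 2^k := by
  have e1 : {x : Fin k → (ZMod N)ˣ // (fun i => Units.map (ρ α).toMonoidHom (x i)) = y}
      ≃ {x : Fin k → (ZMod N)ˣ // ∀ i, ρ α ((x i : ZMod N)) = ((y i : ZMod M))} :=
    Equiv.subtypeEquivRight (by
      intro x
      rw [funext_iff]
      constructor
      · intro h i; have := h i; rw [Units.ext_iff] at this; exact this
      · intro h i; apply Units.ext; exact h i)
  rw [Nat.card_congr e1,
    Nat.card_congr (@Equiv.subtypePiEquivPi (Fin k) (fun _ => (ZMod (2^(α+1)))ˣ)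
      (fun i v => ρ α (v : ZMod (2^(α+1))) = ((y i : ZMod (2^α))))), Nat.card_pi]
  calc ∏ i : Fin k, Nat.card {v : (ZMod N)ˣ // ρ α (v : ZMod N) = ((y i : ZMod M))}
      = ∏ _i : Fin k, 2 := Finset.prod_congr rfl (fun i _ => fiber_card α hα (y i))
    _ = 2^k := by simp

open Finset in
lemma step_count (hα : 3 ≤ α) (k : ℕ) (hk : 0 < k) (c : ZMod N) :
    Nat.card {x : Fin k → (ZMod N)ˣ // ∑ i, ((x i : ZMod N)) ^ 2 = c}
      = 2^(k-1) *
        Nat.card {y : Fin k → (ZMod M)ˣ // ∑ i, ((y i : ZMod M)) ^ 2 = ρ α c} := by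
  classical
  set d : ZMod N := ((2^α : ℕ) : ZMod N) with hd
  set S : (Fin k → (ZMod M)ˣ) → ZMod N := fun y => ∑ i, σ α ((y i : ZMod M)) with hS
  set r : (Fin k → (ZMod N)ˣ) → (Fin k → (ZMod M)ˣ) :=
    fun x i => Units.map (ρ α).toMonoidHom (x i) with hr
  set B0 : Finset (Fin k → (ZMod M)ˣ) := Finset.univ.filter (fun y => S y = c) with hB0
  set B1 : Finset (Fin k → (ZMod M)ˣ) := Finset.univ.filter (fun y => S y = c + d) with hB1
  have hcoe_r : ∀ (x : Fin k → (ZMod N)ˣ) (i : Fin k),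
      ((r x i : (ZMod M)ˣ) : ZMod M) = ρ α ((x i : ZMod N)) := fun x i => rfl
  have hρS : ∀ y : Fin k → (ZMod M)ˣ, ρ α (S y) = ∑ i, ((y i : ZMod M)) ^ 2 := by
    intro y
    rw [hS, map_sum]
    exact Finset.sum_congr rfl (fun i _ => rho_sigma α _)
  -- Claim 1 : LHS = B0.card * 2^k
  have claim1 : Nat.card {x : Fin k → (ZMod N)ˣ // ∑ i, ((x i : ZMod N)) ^ 2 = c}
      = B0.card * 2^k := by
    rw [Nat.card_eq_fintype_card, Fintype.card_subtype]
    have hPred : ∀ x : Fin k → (ZMod N)ˣ,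
        (∑ i, ((x i : ZMod N)) ^ 2 = c) ↔ (S (r x) = c) := by
      intro x
      have : ∑ i, ((x i : ZMod N)) ^ 2 = S (r x) := by
        rw [hS]
        exact Finset.sum_congr rfl (fun i _ => by
          rw [hcoe_r, ← sq_eq_sigma α (by omega)])
      rw [this]
    rw [Finset.filter_congr (fun x _ => hPred x)]
    rw [Finset.card_eq_sum_card_fiberwise (f := r) (t := B0)
      (fun x hx => by
        rw [hB0, Finset.mem_coe, Finset.mem_filter]
        exact ⟨Finset.mem_univ _, (Finset.mem_filter.mp (Finset.mem_coe.mp hx)).2⟩)]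
    have hsummand : ∀ y ∈ B0,
        (Finset.filter (fun x => r x = y) (Finset.filter (fun x => S (r x) = c)
          Finset.univ)).card = 2^k := by
      intro y hy
      have hyc : S y = c := (Finset.mem_filter.mp hy).2
      rw [Finset.filter_filter]
      have : Finset.filter (fun x => S (r x) = c ∧ r x = y) Finset.univ
          = Finset.filter (fun x => r x = y) Finset.univ := by
        apply Finset.filter_congr
        intro x _
        constructor
        · exact fun h => h.2
        · intro h; exact ⟨by rw [h, hyc], h⟩
      rw [this, ← Fintype.card_subtype, ← Nat.card_eq_fintype_card]
      exact tuple_fiber_card α (by omega) k y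
    rw [Finset.sum_congr rfl hsummand, Finset.sum_const, smul_eq_mul]
  -- Claim 2 : RHS card = B0.card + B1.card
  have claim2 : Nat.card {y : Fin k → (ZMod M)ˣ // ∑ i, ((y i : ZMod M)) ^ 2 = ρ α c}
      = B0.card + B1.card := by
    rw [Nat.card_eq_fintype_card, Fintype.card_subtype]
    have hsplit : Finset.filter (fun y => ∑ i, ((y i : ZMod M)) ^ 2 = ρ α c) Finset.univ
        = B0 ∪ B1 := by
      ext y
      rw [Finset.mem_filter, Finset.mem_union, hB0, hB1, Finset.mem_filter,
        Finset.mem_filter]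
      constructor
      · intro ⟨_, h⟩
        have h2 : ρ α (S y) = ρ α c := by rw [hρS, h]
        rcases Kdich α _ _ h2 with h3 | h3
        · exact Or.inl ⟨Finset.mem_univ _, h3⟩
        · exact Or.inr ⟨Finset.mem_univ _, h3⟩
      · rintro (⟨_, h⟩ | ⟨_, h⟩)
        · exact ⟨Finset.mem_univ _, by rw [← hρS, h]⟩
        · refine ⟨Finset.mem_univ _, by
            rw [← hρS, h, map_add, hd, rho_natCast, M_natCast_self, add_zero]⟩
    rw [hsplit]
    apply Finset.card_union_of_disjoint
    rw [Finset.disjoint_left]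
    intro y hy0 hy1
    rw [hB0, Finset.mem_filter] at hy0
    rw [hB1, Finset.mem_filter] at hy1
    have hcd : c = c + d := hy0.2.symm.trans hy1.2
    exact d_ne_zero α (by linear_combination -hcd)
  -- Claim 3 : B1.card = B0.card
  have claim3 : B0.card = B1.card := by
    have h2α : 2 ≤ α := Nat.le_of_succ_le hα
    set i0 : Fin k := ⟨0, hk⟩ with hi0
    have hsum_upd : ∀ (y : Fin k → (ZMod M)ˣ) (u' : (ZMod M)ˣ),
        S (Function.update y i0 u')
          = σ α (u' : ZMod M) + ∑ i ∈ Finset.univ.erase i0, σ α ((y i : ZMod M)) := by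
      intro y u'
      show (∑ i, σ α ((Function.update y i0 u' i : (ZMod (2^α))ˣ) : ZMod (2^α))) = _
      rw [← Finset.add_sum_erase Finset.univ
        (fun i => σ α ((Function.update y i0 u' i : (ZMod M)ˣ) : ZMod M))
        (Finset.mem_univ i0)]
      congr 1
      apply Finset.sum_congr rfl
      intro i hi
      rw [Function.update_of_ne (Finset.ne_of_mem_erase hi)]
    have hS_upd : ∀ y : Fin k → (ZMod M)ˣ,
        S (Function.update y i0 (iu α h2α (y i0))) = S y + d := by
      intro y
      rw [hsum_upd, sigma_iu α hα]
      have hy : S y = σ α ((y i0 : ZMod M))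
          + ∑ i ∈ Finset.univ.erase i0, σ α ((y i : ZMod M)) := by
        have := hsum_upd y (y i0)
        rwa [Function.update_eq_self] at this
      rw [hy, ← hd]; ring
    have hinv : ∀ y : Fin k → (ZMod M)ˣ,
        Function.update (Function.update y i0 (iu α h2α (y i0))) i0
          (iu α h2α
            ((Function.update y i0 (iu α h2α (y i0))) i0)) = y := by
      intro y
      rw [Function.update_self, iu_invol, Function.update_idem, Function.update_eq_self]
    refine Finset.card_bij'
      (fun y _ => Function.update y i0 (iu α h2α (y i0)))
      (fun y _ => Function.update y i0 (iu α h2α (y i0))) ?_ ?_ ?_ ?_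
    · intro y hy
      rw [hB1, Finset.mem_filter]
      rw [hB0, Finset.mem_filter] at hy
      exact ⟨Finset.mem_univ _, by rw [hS_upd, hy.2]⟩
    · intro y hy
      rw [hB0, Finset.mem_filter]
      rw [hB1, Finset.mem_filter] at hy
      refine ⟨Finset.mem_univ _, ?_⟩
      rw [hS_upd, hy.2]
      have hdd : d + d = 0 := by
        rw [hd]
        have hn : (2^α + 2^α : ℕ) = 2^(α+1) := by rw [pow_succ]; ring
        calc ((2^α : ℕ) : ZMod N) + ((2^α : ℕ) : ZMod N)
            = ((2^α + 2^α : ℕ) : ZMod N) := by push_cast; ring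
          _ = 0 := by rw [hn, Nzero]
      linear_combination hdd
    · exact fun y _ => hinv y
    · exact fun y _ => hinv y
  -- assemble
  rw [claim1, claim2, ← claim3]
  have h2k : 2^k = 2^(k-1) * 2 := by
    rw [← pow_succ]; congr 1; exact (Nat.succ_pred_eq_of_pos hk).symm
  rw [h2k]; ring

end Step

lemma base_count (k : ℕ) (hk : 0 < k) (c : ZMod (2^3)) (h8 : (8:ℕ) ∣ 2^3) :
    Nat.card {x : Fin k → (ZMod (2^3))ˣ // ∑ i, ((x i : ZMod (2^3))) ^ 2 = c} =
      if ZMod.castHom h8 (ZMod 8) c = (k : ZMod 8) then 2^(2*k) else 0 := by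
  have hsq : ∀ u : (ZMod (2^3))ˣ, (u : ZMod (2^3))^2 = 1 := by decide
  have hsum : ∀ x : Fin k → (ZMod (2^3))ˣ,
      ∑ i, ((x i : ZMod (2^3))) ^ 2 = (k : ZMod (2^3)) := by
    intro x
    rw [Finset.sum_congr rfl (fun i _ => hsq (x i)), Finset.sum_const,
      Finset.card_univ, Fintype.card_fin, nsmul_eq_mul, mul_one]
  have hinj : ∀ a b : ZMod (2^3), ZMod.castHom h8 (ZMod 8) a
      = ZMod.castHom h8 (ZMod 8) b → a = b := by
    have : ∀ a b : ZMod (2^3), ZMod.castHom (by norm_num : (8:ℕ) ∣ 2^3) (ZMod 8) a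
        = ZMod.castHom (by norm_num : (8:ℕ) ∣ 2^3) (ZMod 8) b → a = b := by decide
    exact this
  have hcond : (ZMod.castHom h8 (ZMod 8) c = (k : ZMod 8)) ↔ c = (k : ZMod (2^3)) := by
    constructor
    · intro h
      apply hinj
      rw [h, map_natCast]
    · intro h
      rw [h, map_natCast]
  by_cases hc : c = (k : ZMod (2^3))
  · rw [if_pos (hcond.mpr hc)]
    have hall : ∀ x : Fin k → (ZMod (2^3))ˣ, ∑ i, ((x i : ZMod (2^3))) ^ 2 = c := by
      intro x; rw [hsum, hc]
    rw [Nat.card_congr (Equiv.subtypeUnivEquiv hall), Nat.card_pi]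
    have hU : Nat.card (ZMod (2^3))ˣ = 4 := by
      rw [Nat.card_eq_fintype_card]; decide
    calc ∏ _i : Fin k, Nat.card (ZMod (2^3))ˣ = ∏ _i : Fin k, 4 :=
          Finset.prod_congr rfl (fun i _ => hU)
      _ = 4^k := by simp
      _ = 2^(2*k) := by rw [pow_mul]; norm_num
  · rw [if_neg (fun h => hc (hcond.mp h))]
    have : IsEmpty {x : Fin k → (ZMod (2^3))ˣ // ∑ i, ((x i : ZMod (2^3))) ^ 2 = c} :=
      ⟨fun x => hc (((hsum x.1).symm.trans x.2).symm)⟩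
    exact Nat.card_of_isEmpty

lemma aux (α : ℕ) (hα : 3 ≤ α) (k : ℕ) (hk : 0 < k) :
    ∀ (c : ZMod (2^α)) (h8 : (8:ℕ) ∣ 2^α),
      Nat.card {x : Fin k → (ZMod (2^α))ˣ // ∑ i, ((x i : ZMod (2^α))) ^ 2 = c} =
      if ZMod.castHom h8 (ZMod 8) c = (k : ZMod 8) then 2^(2*k + (α-3)*(k-1)) else 0 := by
  induction α, hα using Nat.le_induction with
  | base =>
    intro c h8
    have h30 : 2*k + (3-3)*(k-1) = 2*k := by norm_num
    rw [h30]
    exact base_count k hk c h8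
  | succ α hα ih =>
    intro c h8
    have h8' : (8:ℕ) ∣ 2^α := (show (8:ℕ) = 2^3 by norm_num) ▸ pow_dvd_pow 2 hα
    rw [step_count α hα k hk c, ih (ρ α c) h8']
    have hcast : ZMod.castHom h8' (ZMod 8) (ρ α c) = ZMod.castHom h8 (ZMod 8) c :=
      RingHom.congr_fun (ZMod.castHom_comp h8' (hMN α)) c
    rw [hcast]
    by_cases hcond : ZMod.castHom h8 (ZMod 8) c = (k : ZMod 8)
    · rw [if_pos hcond, if_pos hcond, ← pow_add]
      congr 1
      have he : α + 1 - 3 = (α - 3) + 1 := by omega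
      rw [he]; ring
    · rw [if_neg hcond, if_neg hcond, mul_zero]

end CSQ

/-- number of representations as sums of `k` squares of units in
`ZMod (2^α)` for `α > 2`. -/
theorem count_sum_sq_units_two_pow (α : ℕ) (hα : 2 < α) (k : ℕ) (hk : 0 < k)
    (c : ZMod (2 ^ α)) :
    Nat.card {x : Fin k → (ZMod (2 ^ α))ˣ // ∑ i, ((x i : ZMod (2 ^ α))) ^ 2 = c} =
      if ZMod.castHom (show (8 : ℕ) ∣ 2 ^ α by
          calc (8 : ℕ) = 2 ^ 3 := by norm_num
            _ ∣ 2 ^ α := pow_dvd_pow 2 (by omega)) (ZMod 8) c = (k : ZMod 8)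
      then 2 ^ (2 * k + (α - 3) * (k - 1)) else 0 := by
  exact CSQ.aux α hα k hk c _
end
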